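/- Let α ∈ K and let S_α := Σ_{g ∈ G} g(α)·g be the orbit sum of α in the group algebra K[G]. Then α is a normal element of K/F if and only if S_α is a unit in K[G]. -/

import Mathlib

/-- α is a normal element of K/F iff the orbit sum
S_α = Σ_{g ∈ G} g(α)·g is a unit in the group algebra K[G]. -/
theorem normal_iff_orbitSum_isUnit
    (F K : Type*) [Field F] [Field K] [CharZero F] [Algebra F K]
    [FiniteDimensional F K] [IsGalois F K]
    [Fintype (K ≃ₐ[F] K)] (α : K) :
    (∃ b : Module.Basis (K ≃ₐ[F] K) F K, ∀ g : K ≃ₐ[F] K, b g = g α) ↔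
      IsUnit (∑ g : K ≃ₐ[F] K, MonoidAlgebra.single g (g α)) := by
  classical
  set A : Matrix (K ≃ₐ[F] K) (K ≃ₐ[F] K) K := Matrix.of (fun σ g => σ (g α)) with hA
  have hcard : Fintype.card (K ≃ₐ[F] K) = Module.finrank F K := by
    convert IsGalois.card_aut_eq_finrank F K using 2
    exact Nat.card_eq_fintype_card.symm
  -- Step 1: normality ↔ det A ≠ 0
  have step1 : (∃ b : Module.Basis (K ≃ₐ[F] K) F K, ∀ g : K ≃ₐ[F] K, b g = g α) ↔ A.det ≠ 0 := by
    constructor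
    · rintro ⟨b, hb⟩ hdet
      obtain ⟨v, hv0, hvA⟩ := Matrix.exists_vecMul_eq_zero_iff.mpr hdet
      -- the linear map Σ v σ • σ vanishes on the basis b, hence is zero
      let f : K →ₗ[F] K := ∑ σ : K ≃ₐ[F] K, v σ • (σ.toAlgHom.toLinearMap)
      have hf : f = 0 := by
        apply b.ext
        intro g
        have := congr_fun hvA g
        simp only [Matrix.vecMul, dotProduct, hA, Matrix.of_apply,
          Pi.zero_apply] at this
        simp [f, hb, LinearMap.sum_apply, smul_eq_mul, this]
      have hli : LinearIndependent K
          (fun σ : K ≃ₐ[F] K => (σ.toAlgHom.toLinearMap : K →ₗ[F] K)) :=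
        (linearIndependent_algHom_toLinearMap F K K).comp
          (fun σ : K ≃ₐ[F] K => σ.toAlgHom)
          (fun _ _ h => by
            ext x; exact DFunLike.congr_fun h x)
      have := Fintype.linearIndependent_iff.mp hli v hf
      exact hv0 (funext this)
    · intro hdet
      have hli : LinearIndependent F (fun g : K ≃ₐ[F] K => g α) := by
        rw [Fintype.linearIndependent_iff]
        intro c hc
        have hmv : A.mulVec (fun g => algebraMap F K (c g)) = 0 := by
          funext σ
          simp only [Matrix.mulVec, dotProduct, hA, Matrix.of_apply, Pi.zero_apply]
          have : σ (∑ g : K ≃ₐ[F] K, c g • g α) = 0 := by rw [hc, map_zero]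
          rw [map_sum] at this
          simp only [Algebra.smul_def, map_mul, AlgEquiv.commutes] at this
          simpa [mul_comm] using this
        have := Matrix.eq_zero_of_mulVec_eq_zero hdet hmv
        intro g
        have := congr_fun this g
        exact (map_eq_zero_iff _ (algebraMap F K).injective).mp this
      refine ⟨basisOfLinearIndependentOfCardEqFinrank hli hcard, fun g => ?_⟩
      rw [coe_basisOfLinearIndependentOfCardEqFinrank]
  -- Step 2: IsUnit S ↔ det A ≠ 0
  have step2 : IsUnit (∑ g : K ≃ₐ[F] K, MonoidAlgebra.single g (g α)) ↔ A.det ≠ 0 := by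
    set S : MonoidAlgebra K (K ≃ₐ[F] K) := ∑ g : K ≃ₐ[F] K, MonoidAlgebra.single g (g α)
      with hS
    let bR : Module.Basis (K ≃ₐ[F] K) K (MonoidAlgebra K (K ≃ₐ[F] K)) := MonoidAlgebra.basis _ K
    have hM : LinearMap.toMatrixAlgEquiv bR (Algebra.lmul K _ S)
        = A.submatrix id ⇑(Equiv.inv (K ≃ₐ[F] K)) := by
      ext i j
      rw [LinearMap.toMatrixAlgEquiv_apply]
      have hbRj : bR j = MonoidAlgebra.single j 1 := by
        rw [show bR = MonoidAlgebra.basis _ K from rfl]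
        exact MonoidAlgebra.basis_apply K j
      rw [hbRj]
      have : Algebra.lmul K (MonoidAlgebra K (K ≃ₐ[F] K)) S (MonoidAlgebra.single j 1)
          = ∑ g : K ≃ₐ[F] K, MonoidAlgebra.single (g * j) (g α) := by
        show S * MonoidAlgebra.single j 1 = _
        rw [hS, Finset.sum_mul]
        simp [MonoidAlgebra.single_mul_single]
      rw [this]
      have hrepr : ∀ x : MonoidAlgebra K (K ≃ₐ[F] K), bR.repr x i = x.coeff i := by
        intro x
        rfl
      rw [hrepr]
      have : (∑ g : K ≃ₐ[F] K, MonoidAlgebra.single (g * j) (g α)).coeff i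
          = ∑ g : K ≃ₐ[F] K, if g = i * j⁻¹ then g α else 0 := by
        rw [MonoidAlgebra.coeff_sum, Finsupp.finset_sum_apply]
        refine Finset.sum_congr rfl fun g _ => ?_
        rw [MonoidAlgebra.coeff_single, Finsupp.single_apply]
        congr 1
        simp only [eq_iff_iff]
        constructor
        · intro h; rw [← h]; group
        · intro h; rw [h]; group
      rw [this, Finset.sum_ite_eq' Finset.univ (i * j⁻¹) (fun g => g α)]
      simp [hA, AlgEquiv.mul_apply]
    constructor
    · intro hu hdet
      have h1 : IsUnit (Algebra.lmul K (MonoidAlgebra K (K ≃ₐ[F] K)) S) :=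
        Algebra.lmul_isUnit_iff.mpr hu
      have h2 : IsUnit (LinearMap.toMatrixAlgEquiv bR (Algebra.lmul K _ S)) :=
        h1.map (LinearMap.toMatrixAlgEquiv bR)
      rw [hM] at h2
      have h3 := (Matrix.isUnit_iff_isUnit_det _).mp h2
      rw [Matrix.det_permute'] at h3
      rw [hdet, mul_zero] at h3
      exact (not_isUnit_zero h3 : False)
    · intro hdet
      have h2 : IsUnit (A.submatrix id ⇑(Equiv.inv (K ≃ₐ[F] K))) := by
        rw [Matrix.isUnit_iff_isUnit_det, Matrix.det_permute', isUnit_iff_ne_zero]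
        intro h
        rcases mul_eq_zero.mp h with h | h
        · have : ((Equiv.Perm.sign (Equiv.inv (K ≃ₐ[F] K)) : ℤ) : K) ≠ 0 := by
            rcases Int.units_eq_one_or (Equiv.Perm.sign (Equiv.inv (K ≃ₐ[F] K))) with h' | h' <;>
              rw [h'] <;> norm_num
          exact this h
        · exact hdet h
      rw [← hM] at h2
      have h1 : IsUnit (Algebra.lmul K (MonoidAlgebra K (K ≃ₐ[F] K)) S) := by
        have := h2.map (LinearMap.toMatrixAlgEquiv bR).symm
        simpa using this
      exact Algebra.lmul_isUnit_iff.mp h1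
  rw [step1, step2]
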